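/- For any positive integers k, l and any positive integer M, Σ_{m,n > 0, m + n < M} 1/(m^k n^l) = Σ over the shuffles of the two words z_k and z_l of the corresponding truncated multiple zeta values; explicitly, Σ_{m,n>0, m+n<M} 1/(m^k n^l) = Σ_{a+b=k+l, a≥1, b≥1} ( C(b-1, b-k) + C(b-1, b-l) ) * ζ_M(a, b), where C(n, r) = 0 if r < 0 or r > n, and ζ_M(a,b) = Σ_{0<n₁<n₂<M} 1/(n₁^a n₂^b). -/

import Mathlib

/-- Truncated double zeta value `ζ_M(a,b) = Σ_{0<n₁<n₂<M} 1/(n₁^a n₂^b)`. -/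
def zetaTr2 (M a b : ℕ) : ℚ :=
  ∑ n2 ∈ Finset.Ioo 0 M, ∑ n1 ∈ Finset.Ioo 0 n2, 1 / ((n1 : ℚ) ^ a * (n2 : ℚ) ^ b)

section ShuffleHelpers

/-- `Apart t k l = Σ_{i=0}^{k} C(l+i,i) t^i (1-t)^{l+1}`. -/
def Apart (t : ℚ) (k l : ℕ) : ℚ :=
  ∑ i ∈ Finset.range (k+1), (((l+i).choose i : ℕ) : ℚ) * t^i * (1-t)^(l+1)

lemma Apart_rec (t : ℚ) (k l : ℕ) :
    Apart t (k+1) (l+1) = t * Apart t k (l+1) + (1-t) * Apart t (k+1) l := by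
  unfold Apart
  rw [Finset.mul_sum, Finset.mul_sum,
      Finset.sum_range_succ' (fun i => (((l+1+i).choose i : ℕ):ℚ) * t^i * (1-t)^(l+1+1)) (k+1),
      Finset.sum_range_succ' (fun i => (1-t) * ((((l+i).choose i : ℕ):ℚ) * t^i * (1-t)^(l+1))) (k+1)]
  have h : ∀ i ∈ Finset.range (k+1),
      (((l+1+(i+1)).choose (i+1) : ℕ):ℚ) * t^(i+1) * (1-t)^(l+1+1)
        = t * ((((l+1+i).choose i : ℕ):ℚ) * t^i * (1-t)^(l+1+1))
          + (1-t) * ((((l+(i+1)).choose (i+1) : ℕ):ℚ) * t^(i+1) * (1-t)^(l+1)) := by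
    intro i _
    have hp : (l+1+(i+1)).choose (i+1) = (l+1+i).choose i + (l+(i+1)).choose (i+1) := by
      have h1 : l+1+(i+1) = (l+1+i)+1 := by omega
      rw [h1, Nat.choose_succ_succ]
      congr 2
      omega
    rw [hp]
    push_cast
    ring
  rw [Finset.sum_congr rfl h, Finset.sum_add_distrib]
  simp
  ring

lemma Apart_base (t : ℚ) (l : ℕ) : Apart t 0 l + Apart (1-t) l 0 = 1 := by
  unfold Apart
  have hg := geom_sum_mul (1-t) (l+1)
  simp only [sub_sub_cancel, Nat.add_zero, Nat.choose_self, Nat.choose_zero_right,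
    Nat.cast_one, one_mul, Finset.range_one, Finset.sum_singleton, pow_zero, pow_one,
    zero_add]
  have hs : ∑ x ∈ Finset.range (l+1), (1-t)^x * t
      = (∑ x ∈ Finset.range (l+1), (1-t)^x) * t := (Finset.sum_mul _ _ _).symm
  rw [hs]
  linear_combination -hg

lemma polyI (t : ℚ) (k l : ℕ) : Apart t k l + Apart (1-t) l k = 1 := by
  induction k generalizing l with
  | zero => exact Apart_base t l
  | succ k ihk =>
    induction l with
    | zero =>
      have := Apart_base (1-t) (k+1)
      rw [sub_sub_cancel] at this
      linarith
    | succ l ihl =>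
      rw [Apart_rec t k l, Apart_rec (1-t) l k]
      have h1 := ihk (l+1)
      have h2 := ihl
      rw [sub_sub_cancel]
      linear_combination t * h1 + (1-t) * h2

lemma key (x y : ℚ) (hx : 0 < x) (hy : 0 < y) (k l : ℕ) :
    1 / (x^(k+1) * y^(l+1)) =
      (∑ i ∈ Finset.range (k+1), (((l+i).choose i : ℕ):ℚ) / (x^(k+1-i) * (x+y)^(l+1+i)))
      + ∑ j ∈ Finset.range (l+1), (((k+j).choose j : ℕ):ℚ) / (y^(l+1-j) * (x+y)^(k+1+j)) := by
  have hs : (0:ℚ) < x + y := by linarith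
  have hx' := hx.ne'
  have hy' := hy.ne'
  have hs' := hs.ne'
  set t : ℚ := x / (x+y) with htdef
  have h1t : 1 - t = y / (x+y) := by rw [htdef]; field_simp; ring
  have hXY : x^(k+1) * y^(l+1) ≠ 0 := by positivity
  have key' :
      ((∑ i ∈ Finset.range (k+1), (((l+i).choose i : ℕ):ℚ) / (x^(k+1-i) * (x+y)^(l+1+i)))
        + ∑ j ∈ Finset.range (l+1), (((k+j).choose j : ℕ):ℚ) / (y^(l+1-j) * (x+y)^(k+1+j)))
        * (x^(k+1) * y^(l+1)) = 1 := by
    rw [add_mul, Finset.sum_mul, Finset.sum_mul]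
    have hA : ∀ i ∈ Finset.range (k+1),
        (((l+i).choose i : ℕ):ℚ) / (x^(k+1-i) * (x+y)^(l+1+i)) * (x^(k+1) * y^(l+1))
          = (((l+i).choose i : ℕ):ℚ) * t^i * (1-t)^(l+1) := by
      intro i hi
      have hik : i ≤ k := Nat.lt_succ_iff.mp (Finset.mem_range.mp hi)
      have hxp : x^(k+1) = x^(k+1-i) * x^i := by rw [← pow_add]; congr 1; omega
      have hsp : (x+y)^(l+1+i) = (x+y)^(l+1) * (x+y)^i := by rw [← pow_add]
      rw [htdef, h1t, div_pow, div_pow, hxp, hsp]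
      field_simp
    have hB : ∀ j ∈ Finset.range (l+1),
        (((k+j).choose j : ℕ):ℚ) / (y^(l+1-j) * (x+y)^(k+1+j)) * (x^(k+1) * y^(l+1))
          = (((k+j).choose j : ℕ):ℚ) * (1-t)^j * (1-(1-t))^(k+1) := by
      intro j hj
      have hjl : j ≤ l := Nat.lt_succ_iff.mp (Finset.mem_range.mp hj)
      have hyp : y^(l+1) = y^(l+1-j) * y^j := by rw [← pow_add]; congr 1; omega
      have hsp : (x+y)^(k+1+j) = (x+y)^(k+1) * (x+y)^j := by rw [← pow_add]
      rw [sub_sub_cancel, htdef, h1t, div_pow, div_pow, hyp, hsp]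
      field_simp
    rw [Finset.sum_congr rfl hA, Finset.sum_congr rfl hB]
    have := polyI t k l
    unfold Apart at this
    exact this
  rw [eq_comm, eq_div_iff hXY]
  exact key'

lemma pair_sum (M : ℕ) (f : ℕ → ℕ → ℚ) :
    ∑ p ∈ ((Finset.Ioo 0 M) ×ˢ (Finset.Ioo 0 M)).filter (fun p => p.1 + p.2 < M),
        f p.1 p.2
      = ∑ N ∈ Finset.Ioo 0 M, ∑ m ∈ Finset.Ioo 0 N, f m (N - m) := by
  rw [Finset.sum_sigma' (Finset.Ioo 0 M) (fun N => Finset.Ioo 0 N) (fun N m => f m (N - m))]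
  apply Finset.sum_nbij' (fun p => (⟨p.1 + p.2, p.1⟩ : Σ _ : ℕ, ℕ))
      (fun s => (s.2, s.1 - s.2))
  · intro p hp
    simp only [Finset.mem_filter, Finset.mem_product, Finset.mem_Ioo, Finset.mem_sigma] at *
    omega
  · intro s hs
    simp only [Finset.mem_filter, Finset.mem_product, Finset.mem_Ioo, Finset.mem_sigma] at *
    omega
  · intro p hp
    simp only [Finset.mem_filter, Finset.mem_product, Finset.mem_Ioo] at hp
    simp only [Nat.add_sub_cancel_left]
  · intro s hs
    simp only [Finset.mem_sigma, Finset.mem_Ioo] at hs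
    have h1 : s.2 + (s.1 - s.2) = s.1 := by omega
    rw [h1]
  · intro p hp
    simp only [Finset.mem_filter, Finset.mem_product, Finset.mem_Ioo] at hp
    simp only [Nat.add_sub_cancel_left]

lemma reflect (N : ℕ) (g : ℕ → ℚ) :
    ∑ m ∈ Finset.Ioo 0 N, g (N - m) = ∑ m ∈ Finset.Ioo 0 N, g m := by
  apply Finset.sum_nbij' (fun m => N - m) (fun m => N - m) <;>
    simp (config := { contextual := true }) [Finset.mem_Ioo] <;> omega

lemma reindex_c (K L T : ℕ) (hT : T = K+1+(L+1)) (g : ℕ → ℕ → ℚ) :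
    ∑ a ∈ Finset.Ioo 0 T,
        (if L+1 ≤ T-a then (((T-a-1).choose (T-a-(L+1)) : ℕ):ℚ) else 0) * g a (T-a)
      = ∑ i ∈ Finset.range (K+1), (((L+i).choose i : ℕ):ℚ) * g (K+1-i) (L+1+i) := by
  subst hT
  set T := K+1+(L+1) with hT
  have hsub : Finset.Ioo 0 (K+2) ⊆ Finset.Ioo 0 T := by
    apply Finset.Ioo_subset_Ioo le_rfl; omega
  rw [← Finset.sum_subset hsub]
  · apply Finset.sum_nbij' (fun a => K+1-a) (fun i => K+1-i)
    · intro a ha; simp only [Finset.mem_Ioo, Finset.mem_range] at *; omega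
    · intro i hi; simp only [Finset.mem_Ioo, Finset.mem_range] at *; omega
    · intro a ha; simp only [Finset.mem_Ioo] at ha; omega
    · intro i hi; simp only [Finset.mem_range] at hi; omega
    · intro a ha
      simp only [Finset.mem_Ioo] at ha
      have e1 : L + (K+1-a) = T-a-1 := by omega
      have e2 : K+1-a = T-a-(L+1) := by omega
      have e3 : K+1-(K+1-a) = a := by omega
      have e4 : L+1+(K+1-a) = T-a := by omega
      rw [e3, e4, e1, e2, if_pos (by omega)]
  · intro a ha hna
    simp only [Finset.mem_Ioo] at ha hna
    rw [if_neg (by omega), zero_mul]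

end ShuffleHelpers

/-- Depth-one shuffle relation for truncated MZVs:
`Σ_{m,n>0, m+n<M} 1/(m^k n^l) = Σ_{a+b=k+l, a,b≥1} (C(b-1,b-k)+C(b-1,b-l)) ζ_M(a,b)`,
with the convention `C(n,r)=0` for `r<0` (encoded by the `if` guards). -/
theorem stmt_3 (k l M : ℕ) (hk : 0 < k) (hl : 0 < l) (hM : 0 < M) :
    (∑ p ∈ ((Finset.Ioo 0 M) ×ˢ (Finset.Ioo 0 M)).filter (fun p => p.1 + p.2 < M),
        1 / ((p.1 : ℚ) ^ k * (p.2 : ℚ) ^ l))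
      = ∑ a ∈ Finset.Ioo 0 (k + l),
          (((if k ≤ k + l - a then (((k + l - a - 1).choose (k + l - a - k) : ℕ) : ℚ) else 0)
            + (if l ≤ k + l - a then (((k + l - a - 1).choose (k + l - a - l) : ℕ) : ℚ) else 0))
            * zetaTr2 M a (k + l - a)) := by
  obtain ⟨k', rfl⟩ : ∃ k', k = k'+1 := ⟨k-1, by omega⟩
  obtain ⟨l', rfl⟩ : ∃ l', l = l'+1 := ⟨l-1, by omega⟩
  -- RHS reshaping
  simp only [add_mul]
  rw [Finset.sum_add_distrib,
      reindex_c l' k' ((k'+1)+(l'+1)) (by omega) (fun a b => zetaTr2 M a b),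
      reindex_c k' l' ((k'+1)+(l'+1)) rfl (fun a b => zetaTr2 M a b)]
  -- LHS reshaping
  rw [pair_sum M (fun a b => 1 / ((a:ℚ)^(k'+1) * (b:ℚ)^(l'+1)))]
  have hstep : ∀ N ∈ Finset.Ioo 0 M,
      (∑ m ∈ Finset.Ioo 0 N, 1/((m:ℚ)^(k'+1) * (((N-m : ℕ)):ℚ)^(l'+1)))
        = (∑ i ∈ Finset.range (k'+1), ∑ m ∈ Finset.Ioo 0 N,
            (((l'+i).choose i : ℕ):ℚ) / ((m:ℚ)^(k'+1-i) * (N:ℚ)^(l'+1+i)))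
          + (∑ j ∈ Finset.range (l'+1), ∑ m ∈ Finset.Ioo 0 N,
            (((k'+j).choose j : ℕ):ℚ) / ((m:ℚ)^(l'+1-j) * (N:ℚ)^(k'+1+j))) := by
    intro N hN
    obtain ⟨hN0, hNM⟩ := Finset.mem_Ioo.mp hN
    have h1 : ∀ m ∈ Finset.Ioo 0 N,
        1/((m:ℚ)^(k'+1) * (((N-m:ℕ)):ℚ)^(l'+1))
          = (∑ i ∈ Finset.range (k'+1),
              (((l'+i).choose i : ℕ):ℚ) / ((m:ℚ)^(k'+1-i) * (N:ℚ)^(l'+1+i)))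
            + (∑ j ∈ Finset.range (l'+1),
              (((k'+j).choose j : ℕ):ℚ) / ((((N-m:ℕ)):ℚ)^(l'+1-j) * (N:ℚ)^(k'+1+j))) := by
      intro m hm
      obtain ⟨hm0, hmN⟩ := Finset.mem_Ioo.mp hm
      have hx : (0:ℚ) < (m:ℚ) := by exact_mod_cast hm0
      have hy : (0:ℚ) < ((N-m:ℕ):ℚ) := by
        have : 0 < N - m := by omega
        exact_mod_cast this
      have hxy : (m:ℚ) + ((N-m:ℕ):ℚ) = (N:ℚ) := by
        have h2 : m + (N - m) = N := by omega
        exact_mod_cast h2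
      have hkey := key (m:ℚ) ((N-m:ℕ):ℚ) hx hy k' l'
      rw [hxy] at hkey
      exact hkey
    rw [Finset.sum_congr rfl h1, Finset.sum_add_distrib]
    congr 1
    · exact Finset.sum_comm
    · rw [Finset.sum_comm]
      apply Finset.sum_congr rfl
      intro j _
      exact reflect N (fun x => (((k'+j).choose j : ℕ):ℚ) / ((x:ℚ)^(l'+1-j) * (N:ℚ)^(k'+1+j)))
  rw [Finset.sum_congr rfl hstep, Finset.sum_add_distrib, add_comm]
  congr 1
  · -- k-guard part: Σ_N Σ_j ... = Σ_j C(k'+j,j) * ζ (l'+1-j) (k'+1+j)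
    rw [Finset.sum_comm]
    apply Finset.sum_congr rfl
    intro j _
    unfold zetaTr2
    rw [Finset.mul_sum]
    apply Finset.sum_congr rfl
    intro N _
    rw [Finset.mul_sum]
    apply Finset.sum_congr rfl
    intro m _
    rw [mul_one_div]
  · rw [Finset.sum_comm]
    apply Finset.sum_congr rfl
    intro i _
    unfold zetaTr2
    rw [Finset.mul_sum]
    apply Finset.sum_congr rfl
    intro N _
    rw [Finset.mul_sum]
    apply Finset.sum_congr rfl
    intro m _
    rw [mul_one_div]
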